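/- Fix 1 ≤ p < 2 and set α = 2 − p. Let u satisfy Hypothesis B on an open set X ⊆ ℝⁿ. Then u is real-valued (in particular u(x₀) > −∞ for every x₀ ∈ X) and locally Hölder continuous on X with exponent α; quantitatively, if the closed ball of radius 3ρ about x₀ is contained in X and 0 < 3ρ ≤ R < dist(x₀, ∂X), then for all x ≠ y in the closed ball B_ρ(x₀): |u(x) − u(y)|/|x−y|^α ≤ [R^α/((R−ρ)^α − ρ^α)] · (M(u, x₀, R) − u(x₀))/R^α. -/

import Mathlib

open Set Filter Topology

noncomputable section

abbrev EucSp (n : ℕ) := EuclideanSpace ℝ (Fin n)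

/-- The ball maximum `M(u, y, t) = sup_{|x − y| ≤ t} u(x)` (so `M(u, y, 0) = u(y)`). -/
def ballSup {n : ℕ} (u : EucSp n → EReal) (y : EucSp n) (t : ℝ) : EReal :=
  sSup (u '' Metric.closedBall y t)

/-- Hypothesis B (for `1 ≤ p < 2`, `α = 2 − p`): `X` is open, `u` is upper
semicontinuous with values in `[−∞, ∞)`, not identically `−∞` on any ball contained
in `X`, the maximum principle holds, and `K_p` double monotonicity holds:
`(M(u,y,t) − M(u,y,s))/(t^α − s^α)` is nondecreasing in `s` and `t` (stated in
cross-multiplied form in `EReal`). -/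
def HypB {n : ℕ} (p : ℝ) (X : Set (EucSp n)) (u : EucSp n → EReal) : Prop :=
  IsOpen X ∧ UpperSemicontinuousOn u X ∧ (∀ x ∈ X, u x < ⊤) ∧
  (∀ y : EucSp n, ∀ r : ℝ, 0 < r → Metric.closedBall y r ⊆ X →
    ∃ x ∈ Metric.closedBall y r, u x ≠ ⊥) ∧
  (∀ y : EucSp n, ∀ t : ℝ, 0 < t → Metric.closedBall y t ⊆ X →
    ballSup u y t = sSup (u '' Metric.sphere y t)) ∧
  (∀ y ∈ X, ∀ s t s' t' : ℝ, 0 ≤ s → s < t → s ≤ s' → t ≤ t' → s' < t' →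
    Metric.closedBall y t' ⊆ X →
    (ballSup u y t - ballSup u y s) * (((t' ^ (2 - p) - s' ^ (2 - p) : ℝ)) : EReal) ≤
      (ballSup u y t' - ballSup u y s') * (((t ^ (2 - p) - s ^ (2 - p) : ℝ)) : EReal))

lemma ballSup_mono {n : ℕ} (u : EucSp n → EReal) (y : EucSp n) {s t : ℝ} (h : s ≤ t) :
    ballSup u y s ≤ ballSup u y t :=
  sSup_le_sSup (Set.image_mono (Metric.closedBall_subset_closedBall h))

lemma ballSup_zero {n : ℕ} (u : EucSp n → EReal) (y : EucSp n) : ballSup u y 0 = u y := by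
  simp [ballSup, Metric.closedBall_zero]

lemma le_ballSup {n : ℕ} (u : EucSp n → EReal) {y x : EucSp n} {t : ℝ}
    (h : x ∈ Metric.closedBall y t) : u x ≤ ballSup u y t :=
  le_sSup (Set.mem_image_of_mem _ h)

lemma ballSup_le_ballSup {n : ℕ} (u : EucSp n → EReal) {y z : EucSp n} {s t : ℝ}
    (h : Metric.closedBall y s ⊆ Metric.closedBall z t) :
    ballSup u y s ≤ ballSup u z t :=
  sSup_le_sSup (Set.image_mono h)

lemma ballSup_lt_top {n : ℕ} {X : Set (EucSp n)} (hX : IsOpen X) {u : EucSp n → EReal}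
    (husc : UpperSemicontinuousOn u X) (htop : ∀ x ∈ X, u x < ⊤)
    {y : EucSp n} {r : ℝ} (hsub : Metric.closedBall y r ⊆ X) :
    ballSup u y r < ⊤ := by
  have hK : IsCompact (Metric.closedBall y r) := isCompact_closedBall y r
  have hU : ∀ x (_ : x ∈ Metric.closedBall y r),
      {z | u z < (((u x).toReal + 1 : ℝ) : EReal)} ∈ 𝓝 x := by
    intro x hx
    have hxX := hsub hx
    have h1 : u x < (((u x).toReal + 1 : ℝ) : EReal) := by
      rcases eq_or_ne (u x) ⊥ with h | h
      · rw [h]; exact EReal.bot_lt_coe _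
      · conv_lhs => rw [← EReal.coe_toReal (htop x hxX).ne h]
        exact_mod_cast lt_add_one _
    have h2 := husc x hxX _ h1
    rwa [nhdsWithin_eq_nhds.2 (hX.mem_nhds hxX)] at h2
  obtain ⟨t, ht⟩ := hK.elim_nhds_subcover'
    (fun x _ => {z | u z < (((u x).toReal + 1 : ℝ) : EReal)}) hU
  have hle : ballSup u y r ≤ t.sup (fun x => (((u x.1).toReal + 1 : ℝ) : EReal)) := by
    apply sSup_le
    rintro v ⟨z, hz, rfl⟩
    have hm := ht hz
    simp only [Set.mem_iUnion] at hm
    obtain ⟨x, hxt, hzx⟩ := hm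
    exact le_trans hzx.le (Finset.le_sup hxt)
  refine lt_of_le_of_lt hle ?_
  refine (Finset.sup_lt_iff (by simp)).2 ?_
  intro x _
  exact EReal.coe_lt_top _

lemma ballSup_ne_bot {n : ℕ} {X : Set (EucSp n)} {u : EucSp n → EReal}
    (hne : ∀ y : EucSp n, ∀ r : ℝ, 0 < r → Metric.closedBall y r ⊆ X →
      ∃ x ∈ Metric.closedBall y r, u x ≠ ⊥)
    {y : EucSp n} {r : ℝ} (hr : 0 < r) (hsub : Metric.closedBall y r ⊆ X) :
    ballSup u y r ≠ ⊥ := by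
  obtain ⟨x, hx, hxb⟩ := hne y r hr hsub
  intro h
  exact hxb (le_bot_iff.1 (h ▸ le_ballSup u hx))

/-- Under Hypothesis B (`1 ≤ p < 2`, `α = 2 − p`), `u` is real-valued and locally
`α`-Hölder continuous, with the quantitative estimate
`|u(x) − u(y)|/|x−y|^α ≤ [R^α/((R−ρ)^α − ρ^α)] · (M(u,x₀,R) − u(x₀))/R^α`. -/
theorem stmt15 (n : ℕ) (p : ℝ) (hp1 : 1 ≤ p) (hp2 : p < 2)
    (X : Set (EucSp n)) (u : EucSp n → EReal) (hB : HypB p X u) :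
    (∀ x ∈ X, u x ≠ ⊥ ∧ u x ≠ ⊤) ∧
    (∀ x₀ ∈ X, ∃ ε : ℝ, 0 < ε ∧ ∃ C : ℝ,
      ∀ x ∈ Metric.closedBall x₀ ε, ∀ y ∈ Metric.closedBall x₀ ε,
        |(u x).toReal - (u y).toReal| ≤ C * dist x y ^ (2 - p)) ∧
    (∀ x₀ ∈ X, ∀ ρ R : ℝ, 0 < ρ → 3 * ρ ≤ R → Metric.closedBall x₀ R ⊆ X →
      ∀ x ∈ Metric.closedBall x₀ ρ, ∀ y ∈ Metric.closedBall x₀ ρ, x ≠ y →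
        |(u x).toReal - (u y).toReal| / dist x y ^ (2 - p) ≤
          (R ^ (2 - p) / ((R - ρ) ^ (2 - p) - ρ ^ (2 - p))) *
            (((ballSup u x₀ R).toReal - (u x₀).toReal) / R ^ (2 - p))) := by
  obtain ⟨hX, husc, htop, hne, -, hq⟩ := hB
  have hα : (0:ℝ) < 2 - p := by linarith
  -- u never equals ⊥ on X
  have hbot : ∀ x ∈ X, u x ≠ ⊥ := by
    intro x hx hb
    obtain ⟨ε, hε, hball⟩ := Metric.isOpen_iff.1 hX x hx
    set r : ℝ := ε / 2 with hr
    have hrpos : 0 < r := by positivity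
    have hsub : Metric.closedBall x r ⊆ X :=
      (Metric.closedBall_subset_ball (by simp [hr]; linarith)).trans hball
    have hsub2 : Metric.closedBall x (r/2) ⊆ X :=
      (Metric.closedBall_subset_closedBall (by linarith)).trans hsub
    have hK := hq x hx 0 r (r/2) r le_rfl hrpos (by positivity) le_rfl (by linarith) hsub
    rw [ballSup_zero, hb] at hK
    have hMb : ballSup u x r ≠ ⊥ := ballSup_ne_bot hne hrpos hsub
    have hMb2 : ballSup u x (r/2) ≠ ⊥ := ballSup_ne_bot hne (by positivity) hsub2
    have hMt : ballSup u x r ≠ ⊤ := (ballSup_lt_top hX husc htop hsub).ne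
    have hMt2 : ballSup u x (r/2) ≠ ⊤ := (ballSup_lt_top hX husc htop hsub2).ne
    have hc : (0:ℝ) < r ^ (2-p) - (r/2) ^ (2-p) := by
      have := Real.rpow_lt_rpow (by positivity : (0:ℝ) ≤ r/2) (by linarith : r/2 < r) hα
      linarith
    rw [EReal.sub_bot hMb, EReal.top_mul_coe_of_pos hc] at hK
    rw [← EReal.coe_toReal hMt hMb, ← EReal.coe_toReal hMt2 hMb2, ← EReal.coe_sub,
      ← EReal.coe_mul] at hK
    exact (EReal.coe_lt_top _).not_ge hK
  -- the one-sided key estimate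
  have key : ∀ x₀ ∈ X, ∀ ρ R : ℝ, 0 < ρ → 3 * ρ ≤ R → Metric.closedBall x₀ R ⊆ X →
      ∀ x ∈ Metric.closedBall x₀ ρ, ∀ y ∈ Metric.closedBall x₀ ρ, x ≠ y →
      (u x).toReal - (u y).toReal ≤
        ((ballSup u x₀ R).toReal - (u x₀).toReal) /
          ((R - ρ) ^ (2 - p) - ρ ^ (2 - p)) * dist x y ^ (2 - p) := by
    intro x₀ hx₀ ρ R hρ hR hsub x hx y hy hxy
    set d : ℝ := dist x y with hdd
    have hd : 0 < d := dist_pos.2 hxy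
    have hd2 : d ≤ 2 * ρ := by
      have := dist_triangle x x₀ y
      have h1 : dist x x₀ ≤ ρ := hx
      have h2 : dist x₀ y ≤ ρ := by rw [dist_comm]; exact hy
      simp only [hdd]; linarith
    have hyX : y ∈ X := hsub (Metric.closedBall_subset_closedBall (by linarith) hy)
    have hyx₀ : dist y x₀ ≤ ρ := hy
    -- ball inclusions
    have hsubd : Metric.closedBall y d ⊆ Metric.closedBall x₀ R :=
      Metric.closedBall_subset_closedBall' (by linarith)
    have hsubρ : Metric.closedBall y ρ ⊆ Metric.closedBall x₀ R :=
      Metric.closedBall_subset_closedBall' (by linarith)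
    have hsubR : Metric.closedBall y (R - ρ) ⊆ Metric.closedBall x₀ R :=
      Metric.closedBall_subset_closedBall' (by linarith)
    -- finiteness
    have hfin : ∀ z : EucSp n, ∀ t : ℝ, 0 < t → Metric.closedBall z t ⊆ X →
        ballSup u z t ≠ ⊥ ∧ ballSup u z t ≠ ⊤ := fun z t ht hs =>
      ⟨ballSup_ne_bot hne ht hs, (ballSup_lt_top hX husc htop hs).ne⟩
    obtain ⟨hb1, ht1⟩ := hfin y d hd (hsubd.trans hsub)
    obtain ⟨hb2, ht2⟩ := hfin y ρ hρ (hsubρ.trans hsub)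
    obtain ⟨hb3, ht3⟩ := hfin y (R - ρ) (by linarith) (hsubR.trans hsub)
    obtain ⟨hb4, ht4⟩ := hfin x₀ R (by linarith) hsub
    have hby : u y ≠ ⊥ := hbot y hyX
    have hty : u y ≠ ⊤ := (htop y hyX).ne
    have hbx₀ : u x₀ ≠ ⊥ := hbot x₀ hx₀
    have htx₀ : u x₀ ≠ ⊤ := (htop x₀ hx₀).ne
    have hbx : u x ≠ ⊥ := hbot x (hsub (Metric.closedBall_subset_closedBall (by linarith) hx))
    have htx : u x ≠ ⊤ := (htop x (hsub (Metric.closedBall_subset_closedBall (by linarith) hx))).ne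
    -- the monotonicity inequality
    have hK := hq y hyX 0 d ρ (R - ρ) le_rfl hd hρ.le (by linarith) (by linarith)
      (hsubR.trans hsub)
    rw [ballSup_zero] at hK
    rw [← EReal.coe_toReal ht1 hb1, ← EReal.coe_toReal ht2 hb2, ← EReal.coe_toReal ht3 hb3,
      ← EReal.coe_toReal hty hby, ← EReal.coe_sub, ← EReal.coe_sub, ← EReal.coe_mul,
      ← EReal.coe_mul, EReal.coe_le_coe_iff] at hK
    set m1 := (ballSup u y d).toReal
    set m2 := (ballSup u y ρ).toReal
    set m3 := (ballSup u y (R - ρ)).toReal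
    set M := (ballSup u x₀ R).toReal
    set a := (u x).toReal
    set b := (u y).toReal
    set c0 := (u x₀).toReal
    -- real comparisons
    have ha1 : a ≤ m1 := EReal.toReal_le_toReal
      (le_ballSup u (Metric.mem_closedBall.2 le_rfl)) hbx ht1
    have hc2 : c0 ≤ m2 := EReal.toReal_le_toReal
      (le_ballSup u (Metric.mem_closedBall.2 (by rw [dist_comm]; exact hyx₀))) hbx₀ ht2
    have hm3 : m3 ≤ M := EReal.toReal_le_toReal (ballSup_le_ballSup u hsubR) hb3 ht4
    have hQ : (0:ℝ) < (R - ρ) ^ (2-p) - ρ ^ (2-p) := by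
      have := Real.rpow_lt_rpow hρ.le (by linarith : ρ < R - ρ) hα
      linarith
    have hdα : (0:ℝ) < d ^ (2-p) := Real.rpow_pos_of_pos hd _
    rw [Real.zero_rpow hα.ne', sub_zero] at hK
    rw [div_mul_eq_mul_div, le_div_iff₀ hQ]
    have h2 : (m3 - m2) * d ^ (2-p) ≤ (M - c0) * d ^ (2-p) :=
      mul_le_mul_of_nonneg_right (by linarith) hdα.le
    nlinarith [mul_le_mul_of_nonneg_right ha1 hQ.le]
  -- part 3
  have part3 : ∀ x₀ ∈ X, ∀ ρ R : ℝ, 0 < ρ → 3 * ρ ≤ R → Metric.closedBall x₀ R ⊆ X →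
      ∀ x ∈ Metric.closedBall x₀ ρ, ∀ y ∈ Metric.closedBall x₀ ρ, x ≠ y →
        |(u x).toReal - (u y).toReal| / dist x y ^ (2 - p) ≤
          (R ^ (2 - p) / ((R - ρ) ^ (2 - p) - ρ ^ (2 - p))) *
            (((ballSup u x₀ R).toReal - (u x₀).toReal) / R ^ (2 - p)) := by
    intro x₀ hx₀ ρ R hρ hR hsub x hx y hy hxy
    have hQ : (0:ℝ) < (R - ρ) ^ (2-p) - ρ ^ (2-p) := by
      have := Real.rpow_lt_rpow hρ.le (by linarith : ρ < R - ρ) hα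
      linarith
    have hRα : (0:ℝ) < R ^ (2-p) := Real.rpow_pos_of_pos (by linarith) _
    have hd : (0:ℝ) < dist x y := dist_pos.2 hxy
    have hdα : (0:ℝ) < dist x y ^ (2-p) := Real.rpow_pos_of_pos hd _
    have heq : (R ^ (2 - p) / ((R - ρ) ^ (2 - p) - ρ ^ (2 - p))) *
        (((ballSup u x₀ R).toReal - (u x₀).toReal) / R ^ (2 - p)) =
        ((ballSup u x₀ R).toReal - (u x₀).toReal) / ((R - ρ) ^ (2 - p) - ρ ^ (2 - p)) := by
      field_simp
    rw [heq, div_le_div_iff₀ hdα hQ]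
    have h1 := key x₀ hx₀ ρ R hρ hR hsub x hx y hy hxy
    have h2 := key x₀ hx₀ ρ R hρ hR hsub y hy x hx (Ne.symm hxy)
    rw [dist_comm y x] at h2
    have habs : |(u x).toReal - (u y).toReal| ≤
        ((ballSup u x₀ R).toReal - (u x₀).toReal) /
          ((R - ρ) ^ (2 - p) - ρ ^ (2 - p)) * dist x y ^ (2 - p) :=
      abs_sub_le_iff.2 ⟨h1, h2⟩
    calc |(u x).toReal - (u y).toReal| * ((R - ρ) ^ (2 - p) - ρ ^ (2 - p))
        ≤ (((ballSup u x₀ R).toReal - (u x₀).toReal) /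
            ((R - ρ) ^ (2 - p) - ρ ^ (2 - p)) * dist x y ^ (2 - p)) *
            ((R - ρ) ^ (2 - p) - ρ ^ (2 - p)) :=
          mul_le_mul_of_nonneg_right habs hQ.le
      _ = ((ballSup u x₀ R).toReal - (u x₀).toReal) * dist x y ^ (2 - p) := by
          field_simp
  refine ⟨fun x hx => ⟨hbot x hx, (htop x hx).ne⟩, ?_, part3⟩
  -- part 2: local Hölder
  intro x₀ hx₀
  obtain ⟨ε₀, hε₀, hball⟩ := Metric.isOpen_iff.1 hX x₀ hx₀
  set R : ℝ := ε₀ / 2 with hRdef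
  have hRpos : 0 < R := by positivity
  have hsub : Metric.closedBall x₀ R ⊆ X :=
    (Metric.closedBall_subset_ball (by simp [hRdef]; linarith)).trans hball
  set ρ : ℝ := R / 3 with hρdef
  have hρpos : 0 < ρ := by positivity
  refine ⟨ρ, hρpos, (R ^ (2 - p) / ((R - ρ) ^ (2 - p) - ρ ^ (2 - p))) *
      (((ballSup u x₀ R).toReal - (u x₀).toReal) / R ^ (2 - p)), ?_⟩
  intro x hx y hy
  rcases eq_or_ne x y with rfl | hxy
  · simp [Real.zero_rpow hα.ne']
  · have h := part3 x₀ hx₀ ρ R hρpos (by rw [hρdef]; linarith) hsub x hx y hy hxy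
    have hdα : (0:ℝ) < dist x y ^ (2-p) := Real.rpow_pos_of_pos (dist_pos.2 hxy) _
    calc |(u x).toReal - (u y).toReal|
        = |(u x).toReal - (u y).toReal| / dist x y ^ (2-p) * dist x y ^ (2-p) := by
          field_simp
      _ ≤ _ := mul_le_mul_of_nonneg_right h hdα.le

end
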